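/- Let ρ be a compactly supported absolutely continuous probability measure on ℝ, and let g : ℝ → ℝ be a convex, nondecreasing, continuously differentiable function with g(t) = 0 for t ≤ 0 and 0 ≤ g'(t) ≤ 1 for all t. Then the regularized dual functional K^g(ψ) = −∫_ℝ g(max_{1≤i≤N}(ψ_i − (x−y_i)²)) ρ(x) dx + Σ_i α_i ψ_i is concave on ℝ^N and continuously differentiable, with ∂K^g/∂ψ_i(ψ) = α_i − G^g_i(ψ), where G^g_i(ψ) = ∫_{Lag_i(ψ)} g'(ψ_i − (x−y_i)²) ρ(x) dx. -/

import Mathlib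

open MeasureTheory Real Filter Set

noncomputable section

/-- The (unrestricted) one-dimensional Laguerre cell of index `i`. -/
def Lag1 {N : ℕ} (y ψ : Fin N → ℝ) (i : Fin N) : Set ℝ :=
  {x : ℝ | ∀ j, (x - y i) ^ 2 - ψ i ≤ (x - y j) ^ 2 - ψ j}

/-- The regularized mass of the `i`-th Laguerre cell, for a regularizing function `g`
and a density `f`. -/
def Gg {N : ℕ} (y : Fin N → ℝ) (g f : ℝ → ℝ) (ψ : Fin N → ℝ) (i : Fin N) : ℝ :=
  ∫ x in Lag1 y ψ i, deriv g (ψ i - (x - y i) ^ 2) * f x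

/-- The regularized dual functional `K^g`. -/
def Kg {N : ℕ} (y α : Fin N → ℝ) (g f : ℝ → ℝ) (ψ : Fin N → ℝ) : ℝ :=
  -(∫ x, g (⨆ i, (ψ i - (x - y i) ^ 2)) * f x) + ∑ i, α i * ψ i

namespace Stmt8Aux

variable {N : ℕ}

lemma exists_max [Nonempty (Fin N)] (h : Fin N → ℝ) :
    ∃ i, (∀ j, h j ≤ h i) ∧ (⨆ j, h j) = h i := by
  obtain ⟨i, hi⟩ := Finite.exists_max h
  exact ⟨i, hi, le_antisymm (ciSup_le hi) (le_ciSup (Set.finite_range h).bddAbove i)⟩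

lemma sup_le_sup_add [Nonempty (Fin N)] (c : Fin N → ℝ) (ψ φ : Fin N → ℝ) :
    (⨆ i, (ψ i - c i)) ≤ (⨆ i, (φ i - c i)) + dist ψ φ := by
  refine ciSup_le fun i => ?_
  have h1 : ψ i - φ i ≤ dist ψ φ := by
    calc ψ i - φ i ≤ |ψ i - φ i| := le_abs_self _
    _ = dist (ψ i) (φ i) := (Real.dist_eq _ _).symm
    _ ≤ dist ψ φ := dist_le_pi_dist ψ φ i
  have h2 : φ i - c i ≤ ⨆ j, (φ j - c j) :=
    le_ciSup (f := fun j => φ j - c j) (Set.finite_range _).bddAbove i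
  linarith

lemma lip_sup [Nonempty (Fin N)] (c : Fin N → ℝ) :
    LipschitzWith 1 (fun ψ : Fin N → ℝ => ⨆ i, (ψ i - c i)) := by
  refine LipschitzWith.of_dist_le_mul fun ψ φ => ?_
  rw [Real.dist_eq]
  simp only [NNReal.coe_one, one_mul]
  rw [abs_sub_le_iff]
  constructor
  · have := sup_le_sup_add c ψ φ; linarith
  · have := sup_le_sup_add c φ ψ; rw [dist_comm] at this; linarith

lemma sup_eq [Nonempty (Fin N)] {c ψ : Fin N → ℝ} {i₀ : Fin N}
    (h : ∀ j, ψ j - c j ≤ ψ i₀ - c i₀) : (⨆ i, (ψ i - c i)) = ψ i₀ - c i₀ :=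
  le_antisymm (ciSup_le h) (le_ciSup (f := fun j => ψ j - c j) (Set.finite_range _).bddAbove i₀)

lemma integrable_mul {f : ℝ → ℝ} (hfm : Measurable f) (hf0 : ∀ x, 0 ≤ f x)
    (hfc : HasCompactSupport f) (hfi : Integrable f)
    {φ : ℝ → ℝ} (hφ : Continuous φ) :
    Integrable (fun x => φ x * f x) := by
  obtain ⟨C, hC⟩ := hfc.exists_bound_of_continuousOn hφ.continuousOn
  refine (hfi.const_mul (max C 0)).mono' ((hφ.measurable.mul hfm).aestronglyMeasurable) ?_
  filter_upwards with x
  rw [norm_mul]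
  calc ‖φ x‖ * ‖f x‖ ≤ max C 0 * ‖f x‖ := by
        by_cases hx : x ∈ tsupport f
        · exact mul_le_mul_of_nonneg_right (le_max_of_le_left (hC x hx)) (norm_nonneg _)
        · simp [image_eq_zero_of_notMem_tsupport hx]
  _ = max C 0 * f x := by rw [Real.norm_eq_abs, abs_of_nonneg (hf0 x)]

lemma cont_sup [Nonempty (Fin N)] {h : Fin N → ℝ → ℝ} (hh : ∀ i, Continuous (h i)) :
    Continuous fun x => ⨆ i, h i x := by
  have : (fun x => ⨆ i, h i x)
      = fun x => Finset.univ.sup' Finset.univ_nonempty (fun i => h i x) := by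
    funext x; rw [Finset.sup'_univ_eq_ciSup]
  rw [this]
  exact Continuous.finset_sup'_apply _ (fun i _ => hh i)

lemma eventually_lag [Nonempty (Fin N)] (c : Fin N → ℝ) (ψ₀ : Fin N → ℝ) (i₀ : Fin N)
    (hmax : ∀ j, j ≠ i₀ → ψ₀ j - c j < ψ₀ i₀ - c i₀) :
    ∀ᶠ ψ in nhds ψ₀, ∀ j, ψ j - c j ≤ ψ i₀ - c i₀ := by
  rw [eventually_all]
  intro j
  by_cases h : j = i₀
  · subst h; filter_upwards with ψ; exact le_refl _
  · have hopen : IsOpen {ψ : Fin N → ℝ | ψ j - c j < ψ i₀ - c i₀} :=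
      isOpen_lt ((continuous_apply j).sub continuous_const)
        ((continuous_apply i₀).sub continuous_const)
    exact Filter.eventually_of_mem (hopen.mem_nhds (hmax j h)) (fun ψ hψ => le_of_lt hψ)

lemma tie_null (y ψ : Fin N → ℝ) (hy : Function.Injective y) :
    volume (⋃ i, ⋃ j, ⋃ (_ : i ≠ j),
      {x : ℝ | ψ i - (x - y i) ^ 2 = ψ j - (x - y j) ^ 2}) = 0 := by
  refine measure_iUnion_null fun i => measure_iUnion_null fun j => measure_iUnion_null fun hij => ?_
  refine Set.Subsingleton.measure_zero ?_ _
  intro a ha b hb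
  have hy' : y i ≠ y j := fun h => hij (hy h)
  have key : (a - b) * (y i - y j) = 0 := by
    simp only [Set.mem_setOf_eq] at ha hb
    nlinarith [ha, hb]
  rcases mul_eq_zero.mp key with h | h
  · linarith [sub_eq_zero.mp h]
  · exact absurd (sub_eq_zero.mp h) hy'

end Stmt8Aux

/-- the regularized dual functional `K^g` is concave on `ℝ^N` and
continuously differentiable, with `∂K^g/∂ψ_i (ψ) = α_i − G^g_i(ψ)`. -/
theorem stmt8 {N : ℕ} (hN : 0 < N)
    (f : ℝ → ℝ) (hfm : Measurable f) (hf0 : ∀ x, 0 ≤ f x)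
    (hfc : HasCompactSupport f) (hfi : ∫ x, f x = 1)
    (g : ℝ → ℝ) (hgconv : ConvexOn ℝ Set.univ g) (hgmono : Monotone g)
    (hgC1 : ContDiff ℝ 1 g) (hg0 : ∀ t ≤ (0 : ℝ), g t = 0)
    (hg' : ∀ t : ℝ, 0 ≤ deriv g t ∧ deriv g t ≤ 1)
    (y : Fin N → ℝ) (hy : StrictMono y)
    (α : Fin N → ℝ) (hα : ∀ i, 0 < α i) (hαs : ∑ i, α i < 1) :
    ConcaveOn ℝ Set.univ (Kg y α g f) ∧
    (∀ ψ : Fin N → ℝ,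
      HasFDerivAt (Kg y α g f)
        (∑ i, ((α i - Gg y g f ψ i) •
          (ContinuousLinearMap.proj i : (Fin N → ℝ) →L[ℝ] ℝ))) ψ) ∧
    Continuous (fun ψ : Fin N → ℝ => fun i => Gg y g f ψ i) := by
  haveI : Nonempty (Fin N) := ⟨⟨0, hN⟩⟩
  have hfInt : Integrable f := by
    by_contra h
    rw [MeasureTheory.integral_undef h] at hfi
    norm_num at hfi
  have hgdiff : Differentiable ℝ g := hgC1.differentiable one_ne_zero
  have hg'cont : Continuous (deriv g) := hgC1.continuous_deriv le_rfl
  have hglip : LipschitzWith 1 g := by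
    refine lipschitzWith_of_nnnorm_deriv_le hgdiff fun x => ?_
    have h1 : ‖deriv g x‖ ≤ 1 := by
      rw [Real.norm_eq_abs, abs_le]; exact ⟨by linarith [(hg' x).1], (hg' x).2⟩
    exact_mod_cast h1
  set m : (Fin N → ℝ) → ℝ → ℝ := fun ψ x => ⨆ i, (ψ i - (x - y i) ^ 2) with hm
  have hqcont : ∀ i : Fin N, Continuous fun x : ℝ => (x - y i) ^ 2 :=
    fun i => (continuous_id.sub continuous_const).pow 2
  have hmcont : ∀ ψ, Continuous (m ψ) := fun ψ =>
    Stmt8Aux.cont_sup (fun i => continuous_const.sub (hqcont i))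
  set F : (Fin N → ℝ) → ℝ → ℝ := fun ψ x => g (m ψ x) * f x with hF
  have hFint : ∀ ψ, Integrable (F ψ) := fun ψ =>
    Stmt8Aux.integrable_mul hfm hf0 hfc hfInt (hgC1.continuous.comp (hmcont ψ))
  have hKg : ∀ ψ, Kg y α g f ψ = -(∫ x, F ψ x) + ∑ i, α i * ψ i := fun ψ => rfl
  have hLagMeas : ∀ (ψ : Fin N → ℝ) (i : Fin N), MeasurableSet (Lag1 y ψ i) := by
    intro ψ i
    have : Lag1 y ψ i = ⋂ j, {x : ℝ | (x - y i) ^ 2 - ψ i ≤ (x - y j) ^ 2 - ψ j} := by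
      ext x; simp [Lag1]
    rw [this]
    exact MeasurableSet.iInter fun j =>
      measurableSet_le ((hqcont i).sub continuous_const).measurable
        ((hqcont j).sub continuous_const).measurable
  -- Part 1 : concavity
  have hconc : ConcaveOn ℝ Set.univ (Kg y α g f) := by
    refine ⟨convex_univ, fun a _ b _ p r hp hr hpr => ?_⟩
    simp only [smul_eq_mul, hKg]
    have hpt : ∀ x, F (p • a + r • b) x ≤ p * F a x + r * F b x := by
      intro x
      have hsup : m (p • a + r • b) x ≤ p * m a x + r * m b x := by
        refine ciSup_le fun i => ?_
        have h1 : a i - (x - y i) ^ 2 ≤ m a x :=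
          le_ciSup (f := fun j => a j - (x - y j) ^ 2) (Set.finite_range _).bddAbove i
        have h2 : b i - (x - y i) ^ 2 ≤ m b x :=
          le_ciSup (f := fun j => b j - (x - y j) ^ 2) (Set.finite_range _).bddAbove i
        have he : (p • a + r • b) i - (x - y i) ^ 2
            = p * (a i - (x - y i) ^ 2) + r * (b i - (x - y i) ^ 2) := by
          simp only [Pi.add_apply, Pi.smul_apply, smul_eq_mul]
          linear_combination ((x - y i) ^ 2) * hpr
        rw [he]
        exact add_le_add (mul_le_mul_of_nonneg_left h1 hp) (mul_le_mul_of_nonneg_left h2 hr)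
      have hgc := hgconv.2 (Set.mem_univ (m a x)) (Set.mem_univ (m b x)) hp hr hpr
      simp only [smul_eq_mul] at hgc
      have hchain : g (m (p • a + r • b) x) ≤ p * g (m a x) + r * g (m b x) :=
        le_trans (hgmono hsup) hgc
      calc F (p • a + r • b) x = g (m (p • a + r • b) x) * f x := rfl
      _ ≤ (p * g (m a x) + r * g (m b x)) * f x :=
          mul_le_mul_of_nonneg_right hchain (hf0 x)
      _ = p * F a x + r * F b x := by rw [hF]; ring
    have hint : ∫ x, F (p • a + r • b) x ≤ ∫ x, (p * F a x + r * F b x) :=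
      integral_mono (hFint _) (((hFint a).const_mul p).add ((hFint b).const_mul r)) hpt
    have heq : ∫ x, (p * F a x + r * F b x) = p * (∫ x, F a x) + r * (∫ x, F b x) := by
      rw [integral_add ((hFint a).const_mul p) ((hFint b).const_mul r)]
      simp only [integral_const_mul]
    have hlin : ∑ i, α i * (p • a + r • b) i
        = p * (∑ i, α i * a i) + r * (∑ i, α i * b i) := by
      rw [Finset.mul_sum, Finset.mul_sum, ← Finset.sum_add_distrib]
      exact Finset.sum_congr rfl fun i _ => by
        simp only [Pi.add_apply, Pi.smul_apply, smul_eq_mul]; ring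
    have h3 : ∫ x, F (p • a + r • b) x ≤ p * (∫ x, F a x) + r * (∫ x, F b x) := heq ▸ hint
    calc p * ((-∫ x, F a x) + ∑ i, α i * a i) + r * ((-∫ x, F b x) + ∑ i, α i * b i)
        = -(p * (∫ x, F a x) + r * (∫ x, F b x))
          + (p * (∑ i, α i * a i) + r * (∑ i, α i * b i)) := by ring
      _ ≤ -(∫ x, F (p • a + r • b) x)
          + (p * (∑ i, α i * a i) + r * (∑ i, α i * b i)) := by linarith
      _ = -(∫ x, F (p • a + r • b) x) + ∑ i, α i * (p • a + r • b) i := by rw [hlin]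
  -- Part 2 : differentiability
  have hderiv : ∀ ψ₀ : Fin N → ℝ,
      HasFDerivAt (Kg y α g f)
        (∑ i, ((α i - Gg y g f ψ₀ i) •
          (ContinuousLinearMap.proj i : (Fin N → ℝ) →L[ℝ] ℝ))) ψ₀ := by
    intro ψ₀
    set T : Set ℝ := ⋃ i, ⋃ j, ⋃ (_ : i ≠ j),
      {x : ℝ | ψ₀ i - (x - y i) ^ 2 = ψ₀ j - (x - y j) ^ 2} with hT
    have hTnull : volume T = 0 := Stmt8Aux.tie_null y ψ₀ hy.injective
    have hae : ∀ᵐ x : ℝ, x ∉ T := measure_eq_zero_iff_ae_notMem.mp hTnull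
    set S : Fin N → Set ℝ :=
      fun i => {x | ∀ j, j ≠ i → ψ₀ j - (x - y j) ^ 2 < ψ₀ i - (x - y i) ^ 2} with hS
    have hSmeas : ∀ i, MeasurableSet (S i) := by
      intro i
      have : S i = ⋂ j, ⋂ (_ : j ≠ i),
          {x : ℝ | ψ₀ j - (x - y j) ^ 2 < ψ₀ i - (x - y i) ^ 2} := by
        ext x; simp [hS]
      rw [this]
      exact MeasurableSet.iInter fun j => MeasurableSet.iInter fun _ =>
        measurableSet_lt (continuous_const.sub (hqcont j)).measurable
          (continuous_const.sub (hqcont i)).measurable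
    have hxS : ∀ x ∉ T, ∃ i, x ∈ S i := by
      intro x hx
      obtain ⟨i, hi, -⟩ := Stmt8Aux.exists_max (fun j => ψ₀ j - (x - y j) ^ 2)
      refine ⟨i, fun j hj => lt_of_le_of_ne (hi j) ?_⟩
      intro heq
      exact hx (Set.mem_iUnion.mpr ⟨j, Set.mem_iUnion.mpr ⟨i, Set.mem_iUnion.mpr ⟨hj, heq⟩⟩⟩)
    set F' : ℝ → (Fin N → ℝ) →L[ℝ] ℝ := fun x => ∑ i,
      (Set.indicator (S i) (fun x => deriv g (ψ₀ i - (x - y i) ^ 2) * f x) x) •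
        (ContinuousLinearMap.proj i : (Fin N → ℝ) →L[ℝ] ℝ) with hF'
    have hintS : ∀ i : Fin N, Integrable
        (Set.indicator (S i) (fun x => deriv g (ψ₀ i - (x - y i) ^ 2) * f x)) := by
      intro i
      refine Integrable.indicator ?_ (hSmeas i)
      exact Stmt8Aux.integrable_mul hfm hf0 hfc hfInt
        (hg'cont.comp (continuous_const.sub (hqcont i)))
    have hF'meas : AEStronglyMeasurable F' volume := by
      refine Finset.aestronglyMeasurable_fun_sum _ fun i _ => ?_
      exact AEStronglyMeasurable.smul_const (hintS i).aestronglyMeasurable _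
    have hdiff : ∀ᵐ x : ℝ, HasFDerivAt (fun ψ => F ψ x) (F' x) ψ₀ := by
      filter_upwards [hae] with x hx
      obtain ⟨i₀, hi₀⟩ := hxS x hx
      have hF'x : F' x = (deriv g (ψ₀ i₀ - (x - y i₀) ^ 2) * f x) •
          (ContinuousLinearMap.proj i₀ : (Fin N → ℝ) →L[ℝ] ℝ) := by
        simp only [hF']
        rw [Finset.sum_eq_single i₀]
        · rw [Set.indicator_of_mem hi₀]
        · intro j _ hj
          have hxj : x ∉ S j := by
            intro hxj
            have h1 := hxj i₀ (Ne.symm hj)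
            have h2 := hi₀ j hj
            linarith
          rw [Set.indicator_of_notMem hxj, zero_smul]
        · exact fun h => absurd (Finset.mem_univ i₀) h
      rw [hF'x]
      have hev : ∀ᶠ ψ in nhds ψ₀, F ψ x = g (ψ i₀ - (x - y i₀) ^ 2) * f x := by
        filter_upwards [Stmt8Aux.eventually_lag (fun i => (x - y i) ^ 2) ψ₀ i₀ hi₀] with ψ hψ
        show g (⨆ i, (ψ i - (x - y i) ^ 2)) * f x = g (ψ i₀ - (x - y i₀) ^ 2) * f x
        rw [Stmt8Aux.sup_eq hψ]
      have h1 : HasFDerivAt (fun ψ : Fin N → ℝ => ψ i₀ - (x - y i₀) ^ 2)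
          (ContinuousLinearMap.proj i₀ : (Fin N → ℝ) →L[ℝ] ℝ) ψ₀ :=
        (ContinuousLinearMap.proj i₀ : (Fin N → ℝ) →L[ℝ] ℝ).hasFDerivAt.sub_const _
      have h2 : HasDerivAt g (deriv g (ψ₀ i₀ - (x - y i₀) ^ 2)) (ψ₀ i₀ - (x - y i₀) ^ 2) :=
        (hgdiff _).hasDerivAt
      have h3 := h2.comp_hasFDerivAt ψ₀ h1
      have h4 := h3.mul_const (f x)
      have h5 : HasFDerivAt (fun ψ : Fin N → ℝ => g (ψ i₀ - (x - y i₀) ^ 2) * f x)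
          ((deriv g (ψ₀ i₀ - (x - y i₀) ^ 2) * f x) •
            (ContinuousLinearMap.proj i₀ : (Fin N → ℝ) →L[ℝ] ℝ)) ψ₀ := by
        refine h4.congr_fderiv ?_
        ext ψ
        simp only [ContinuousLinearMap.smul_apply, ContinuousLinearMap.proj_apply,
          smul_eq_mul, ContinuousLinearMap.coe_smul', Pi.smul_apply]
        ring
      exact h5.congr_of_eventuallyEq hev
    have hlip : ∀ᵐ x : ℝ, LipschitzOnWith (Real.nnabs (f x))
        (fun ψ => F ψ x) (Metric.ball ψ₀ 1) := by
      filter_upwards with x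
      refine LipschitzWith.lipschitzOnWith ?_
      refine LipschitzWith.of_dist_le_mul fun ψ φ => ?_
      have h1 : LipschitzWith 1 (fun ψ : Fin N → ℝ => g (m ψ x)) := by
        have := hglip.comp (Stmt8Aux.lip_sup (fun i => (x - y i) ^ 2))
        simpa [hm, Function.comp_def] using this
      have hdd := h1.dist_le_mul ψ φ
      simp only [NNReal.coe_one, one_mul] at hdd
      have he : F ψ x - F φ x = (g (m ψ x) - g (m φ x)) * f x := by rw [hF]; ring
      rw [Real.dist_eq, he, abs_mul, Real.coe_nnabs]
      rw [Real.dist_eq] at hdd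
      calc |g (m ψ x) - g (m φ x)| * |f x| ≤ dist ψ φ * |f x| :=
        mul_le_mul_of_nonneg_right hdd (abs_nonneg _)
      _ = |f x| * dist ψ φ := mul_comm _ _
    obtain ⟨hF'int, hkey⟩ := hasFDerivAt_integral_of_dominated_loc_of_lip
      (μ := volume) (F := F) (F' := F') (x₀ := ψ₀) (bound := f) (Metric.ball_mem_nhds ψ₀ one_pos)
      (Filter.Eventually.of_forall fun ψ => (hFint ψ).aestronglyMeasurable)
      (hFint ψ₀) hF'meas hlip hfInt hdiff
    have hint_eq : (∫ x, F' x) = ∑ i, (Gg y g f ψ₀ i) •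
        (ContinuousLinearMap.proj i : (Fin N → ℝ) →L[ℝ] ℝ) := by
      simp only [hF']
      rw [integral_finset_sum _ (fun i _ => (hintS i).smul_const _)]
      refine Finset.sum_congr rfl fun i _ => ?_
      rw [integral_smul_const]
      congr 1
      rw [integral_indicator (hSmeas i)]
      have hsub1 : S i ⊆ Lag1 y ψ₀ i := by
        intro x hx j
        by_cases hj : j = i
        · subst hj; exact le_refl _
        · have := hx j hj; linarith
      have hsub2 : Lag1 y ψ₀ i \ S i ⊆ T := by
        intro x hx
        obtain ⟨hxL, hxS'⟩ := hx
        simp only [hS, Set.mem_setOf_eq, not_forall] at hxS'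
        obtain ⟨j, hj, hle⟩ := hxS'
        push_neg at hle
        have hL := hxL j
        have heq : ψ₀ j - (x - y j) ^ 2 = ψ₀ i - (x - y i) ^ 2 := by linarith
        exact Set.mem_iUnion.mpr ⟨j, Set.mem_iUnion.mpr ⟨i,
          Set.mem_iUnion.mpr ⟨hj, heq⟩⟩⟩
      have haeq : S i =ᵐ[volume] Lag1 y ψ₀ i := by
        rw [MeasureTheory.ae_eq_set]
        constructor
        · rw [Set.diff_eq_empty.mpr hsub1]; exact measure_empty
        · exact measure_mono_null hsub2 hTnull
      exact setIntegral_congr_set haeq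
    rw [hint_eq] at hkey
    have hL : HasFDerivAt (fun ψ : Fin N → ℝ => ∑ i, α i * ψ i)
        (∑ i, (α i) • (ContinuousLinearMap.proj i : (Fin N → ℝ) →L[ℝ] ℝ)) ψ₀ := by
      have heq : (fun ψ : Fin N → ℝ => ∑ i, α i * ψ i)
          = fun ψ => (∑ i, (α i) •
            (ContinuousLinearMap.proj i : (Fin N → ℝ) →L[ℝ] ℝ)) ψ := by
        funext ψ
        simp [ContinuousLinearMap.sum_apply, ContinuousLinearMap.smul_apply,
          ContinuousLinearMap.proj_apply]
      rw [heq]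
      exact ContinuousLinearMap.hasFDerivAt _
    have hsum := hkey.neg.add hL
    have hKfun : Kg y α g f = fun ψ => -(∫ x, F ψ x) + ∑ i, α i * ψ i := funext hKg
    rw [hKfun]
    refine hsum.congr_fderiv ?_
    rw [Finset.sum_congr rfl (fun i _ => sub_smul (α i) (Gg y g f ψ₀ i)
      (ContinuousLinearMap.proj i : (Fin N → ℝ) →L[ℝ] ℝ)), Finset.sum_sub_distrib]
    abel
  -- Part 3 : continuity of Gg
  have hGcont : ∀ i : Fin N, Continuous fun ψ => Gg y g f ψ i := by
    intro i
    rw [continuous_iff_continuousAt]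
    intro ψ₀
    have hGg_eq : ∀ ψ : Fin N → ℝ, Gg y g f ψ i
        = ∫ x, Set.indicator (Lag1 y ψ i)
            (fun x => deriv g (ψ i - (x - y i) ^ 2) * f x) x := fun ψ =>
      (integral_indicator (hLagMeas ψ i)).symm
    have hfun : (fun ψ => Gg y g f ψ i) = fun ψ => ∫ x, Set.indicator (Lag1 y ψ i)
        (fun x => deriv g (ψ i - (x - y i) ^ 2) * f x) x := funext hGg_eq
    show Filter.Tendsto (fun ψ => Gg y g f ψ i) (nhds ψ₀) (nhds (Gg y g f ψ₀ i))
    rw [hGg_eq ψ₀]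
    refine Filter.Tendsto.congr' (Filter.Eventually.of_forall fun ψ => (hGg_eq ψ).symm) ?_
    set T : Set ℝ := ⋃ k, ⋃ j, ⋃ (_ : k ≠ j),
      {x : ℝ | ψ₀ k - (x - y k) ^ 2 = ψ₀ j - (x - y j) ^ 2} with hT
    have hTnull : volume T = 0 := Stmt8Aux.tie_null y ψ₀ hy.injective
    have hae : ∀ᵐ x : ℝ, x ∉ T := measure_eq_zero_iff_ae_notMem.mp hTnull
    refine tendsto_integral_filter_of_dominated_convergence f ?_ ?_ hfInt ?_
    · refine Filter.Eventually.of_forall fun ψ => ?_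
      refine AEStronglyMeasurable.indicator ?_ (hLagMeas ψ i)
      exact (Stmt8Aux.integrable_mul hfm hf0 hfc hfInt
        ((hg'cont.comp (continuous_const.sub (hqcont i))))).aestronglyMeasurable
    · refine Filter.Eventually.of_forall fun ψ => Filter.Eventually.of_forall fun x => ?_
      calc ‖Set.indicator (Lag1 y ψ i) (fun x => deriv g (ψ i - (x - y i) ^ 2) * f x) x‖
          ≤ ‖deriv g (ψ i - (x - y i) ^ 2) * f x‖ := norm_indicator_le_norm_self _ _
      _ = |deriv g (ψ i - (x - y i) ^ 2)| * |f x| := by rw [norm_mul]; rfl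
      _ ≤ 1 * |f x| := by
          refine mul_le_mul_of_nonneg_right ?_ (abs_nonneg _)
          rw [abs_le]
          refine ⟨?_, (hg' _).2⟩
          have := (hg' (ψ i - (x - y i) ^ 2)).1
          linarith
      _ = f x := by rw [one_mul, abs_of_nonneg (hf0 x)]
    · filter_upwards [hae] with x hx
      by_cases hxL : x ∈ Lag1 y ψ₀ i
      · have hstrict : ∀ j, j ≠ i → ψ₀ j - (x - y j) ^ 2 < ψ₀ i - (x - y i) ^ 2 := by
          intro j hj
          have h1 := hxL j
          refine lt_of_le_of_ne (by linarith) ?_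
          intro heq
          exact hx (Set.mem_iUnion.mpr ⟨j, Set.mem_iUnion.mpr ⟨i,
            Set.mem_iUnion.mpr ⟨hj, heq⟩⟩⟩)
        have hev : ∀ᶠ ψ in nhds ψ₀,
            Set.indicator (Lag1 y ψ i) (fun x => deriv g (ψ i - (x - y i) ^ 2) * f x) x
            = deriv g (ψ i - (x - y i) ^ 2) * f x := by
          filter_upwards [Stmt8Aux.eventually_lag (fun j => (x - y j) ^ 2) ψ₀ i hstrict]
            with ψ hψ
          have : x ∈ Lag1 y ψ i := by
            intro j; have := hψ j; linarith
          rw [Set.indicator_of_mem this]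
        have hcont : Filter.Tendsto (fun ψ : Fin N → ℝ => deriv g (ψ i - (x - y i) ^ 2) * f x)
            (nhds ψ₀) (nhds (deriv g (ψ₀ i - (x - y i) ^ 2) * f x)) := by
          exact ((hg'cont.comp ((continuous_apply i).sub continuous_const)).mul
            continuous_const).tendsto ψ₀
        rw [Set.indicator_of_mem hxL]
        exact hcont.congr' (hev.mono fun ψ h => h.symm)
      · have : ∃ j, ψ₀ i - (x - y i) ^ 2 < ψ₀ j - (x - y j) ^ 2 := by
          by_contra hcon
          push_neg at hcon
          exact hxL (fun j => by have := hcon j; linarith)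
        obtain ⟨j, hj⟩ := this
        have hopen : IsOpen {ψ : Fin N → ℝ | ψ i - (x - y i) ^ 2 < ψ j - (x - y j) ^ 2} :=
          isOpen_lt ((continuous_apply i).sub continuous_const)
            ((continuous_apply j).sub continuous_const)
        have hev : ∀ᶠ ψ in nhds ψ₀,
            Set.indicator (Lag1 y ψ i) (fun x => deriv g (ψ i - (x - y i) ^ 2) * f x) x
            = 0 := by
          filter_upwards [hopen.mem_nhds hj] with ψ hψ
          have : x ∉ Lag1 y ψ i := by
            intro hmem
            have h2 := hmem j
            linarith
          rw [Set.indicator_of_notMem this]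
        rw [Set.indicator_of_notMem hxL]
        exact (tendsto_const_nhds).congr' (hev.mono fun ψ h => h.symm)
  exact ⟨hconc, hderiv, continuous_pi hGcont⟩
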